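/- Let D_t be the acyclic digraph with vertex set X ∪ Y ∪ {z} ∪ Y' ∪ X', where X = {x_1,…,x_t}, X' = {x'_1,…,x'_t}, Y = {y_1,…,y_r}, Y' = {y'_1,…,y'_r}, and arcs x_i→x_{i+1}, x'_i→x'_{i+1} for i ∈ [t−1], and x_t→y_j, y_j→z, z→y'_j, y'_j→x'_1 for j ∈ [r]. Then for every Q ⊆ Y and Q' ⊆ Y', the set Q ∪ {z} ∪ Q' is a connected convex set of D_t. In particular, D_t has at least 2^{2r} connected convex sets. -/

import Mathlib

/-!
Digraphs are given by an arc relation `A : V → V → Prop` on a vertex type `V`.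
A directed path from `a` to `b` is encoded as `a :: (l ++ [b])` where the list
satisfies `List.Chain A` (consecutive arcs) and `List.Nodup` (distinct vertices);
`l` is the list of internal vertices.
-/

variable {V : Type*}

/-- A non-empty vertex set `X` is convex if no directed path between two
vertices of `X` contains a vertex not in `X`. -/
def ConvexIn (A : V → V → Prop) (X : Set V) : Prop :=
  X.Nonempty ∧ ∀ a b : V, ∀ l : List V, a ∈ X → b ∈ X →
    List.Chain A a (l ++ [b]) → (a :: (l ++ [b])).Nodup → ∀ w ∈ l, w ∈ X

/-- A vertex set is connected if the underlying undirected graph induced on it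
is connected. -/
def ConnectedIn (A : V → V → Prop) (X : Set V) : Prop :=
  ((SimpleGraph.fromRel A).induce X).Connected

/-- A digraph is acyclic if it has no directed cycle, equivalently no
nontrivial directed closed walk. -/
def AcyclicDigraph (A : V → V → Prop) : Prop :=
  ∀ v, ¬ Relation.TransGen A v v

/-- A digraph is connected if its underlying undirected graph is connected. -/
def DigraphConnected (A : V → V → Prop) : Prop :=
  (SimpleGraph.fromRel A).Connected

/-- A source is a vertex with in-degree zero. -/
def IsSourceIn (A : V → V → Prop) (v : V) : Prop := ∀ u, ¬ A u v

/-- A sink is a vertex with out-degree zero. -/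
def IsSinkIn (A : V → V → Prop) (v : V) : Prop := ∀ u, ¬ A v u

/-- A cut-vertex of a connected digraph: deleting it disconnects the
underlying undirected graph. -/
def IsCutVertexIn (A : V → V → Prop) (v : V) : Prop :=
  ¬ ((SimpleGraph.fromRel A).induce {u | u ≠ v}).Connected

/-- Vertices of the digraph `D_t` (with parameter `r`): two directed paths
`x 0 → ⋯ → x (t-1)` and `x' 0 → ⋯ → x' (t-1)`, joined through the vertex
sets `Y = {y j}`, `Y' = {y' j}` (`j : Fin r`) and a middle vertex `z`. -/
inductive DV (t r : ℕ) : Type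
  | x : Fin t → DV t r
  | y : Fin r → DV t r
  | z : DV t r
  | y' : Fin r → DV t r
  | x' : Fin t → DV t r
deriving DecidableEq

/-- Arcs of `D_t`: `x i → x (i+1)` and `x' i → x' (i+1)` along the two paths,
and `x_t → y j`, `y j → z`, `z → y' j`, `y' j → x'_1` for each `j`. -/
def DAdj {t r : ℕ} : DV t r → DV t r → Prop
  | DV.x i, DV.x j => (i : ℕ) + 1 = (j : ℕ)
  | DV.x' i, DV.x' j => (i : ℕ) + 1 = (j : ℕ)
  | DV.x i, DV.y _ => (i : ℕ) + 1 = t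
  | DV.y _, DV.z => True
  | DV.z, DV.y' _ => True
  | DV.y' _, DV.x' j => (j : ℕ) = 0
  | _, _ => False


deriving instance Fintype for DV

def dRank {t r : ℕ} : DV t r → ℕ
  | DV.x i => i
  | DV.y _ => t
  | DV.z => t + 1
  | DV.y' _ => t + 2
  | DV.x' i => t + 3 + i

lemma dRank_lt {t r : ℕ} {u v : DV t r} (h : DAdj u v) : dRank u < dRank v := by
  cases u <;> cases v <;> simp [DAdj, dRank] at h ⊢ <;> omega

lemma dRank_eq_z {t r : ℕ} {w : DV t r} (hw : dRank w = t + 1) : w = DV.z := by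
  cases w <;> simp [dRank] at hw ⊢
  case x i => exact absurd hw (by have := i.isLt; omega)
  case x' i => omega

instance {t r : ℕ} : IsTrans (DV t r) (fun u v => dRank u < dRank v) :=
  ⟨fun _ _ _ => lt_trans⟩

lemma main_part {t r : ℕ} (Q Q' : Set (Fin r)) :
    ConnectedIn DAdj ((DV.y '' Q) ∪ {DV.z} ∪ (DV.y' '' Q') : Set (DV t r)) ∧
    ConvexIn DAdj ((DV.y '' Q) ∪ {DV.z} ∪ (DV.y' '' Q') : Set (DV t r)) := by
  set S : Set (DV t r) := (DV.y '' Q) ∪ {DV.z} ∪ (DV.y' '' Q') with hS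
  have hz : DV.z ∈ S := Or.inl (Or.inr rfl)
  have hrank : ∀ a ∈ S, t ≤ dRank a ∧ dRank a ≤ t + 2 := by
    rintro a ((⟨j, hj, rfl⟩ | rfl) | ⟨j, hj, rfl⟩) <;> simp [dRank]
  constructor
  · -- connectedness
    set G := (SimpleGraph.fromRel (DAdj (t := t) (r := r))).induce S with hG
    have key : ∀ u : ↥S, G.Reachable u ⟨DV.z, hz⟩ := by
      rintro ⟨u, hu⟩
      rcases hu with (⟨j, hj, rfl⟩ | rfl) | ⟨j, hj, rfl⟩
      · refine SimpleGraph.Adj.reachable ?_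
        simp [hG, SimpleGraph.fromRel_adj, DAdj]
      · exact SimpleGraph.Reachable.refl _
      · refine SimpleGraph.Adj.reachable ?_
        simp [hG, SimpleGraph.fromRel_adj, DAdj]
    haveI : Nonempty ↥S := ⟨⟨DV.z, hz⟩⟩
    exact ⟨fun u v => (key u).trans (key v).symm⟩
  · -- convexity
    refine ⟨⟨DV.z, hz⟩, ?_⟩
    intro a b l ha hb hc _ w hw
    have hc' : List.Chain (fun u v : DV t r => dRank u < dRank v) a (l ++ [b]) :=
      List.IsChain.imp (fun _ _ => dRank_lt) hc
    have hp := List.isChain_iff_pairwise.mp hc'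
    rw [List.pairwise_cons] at hp
    have h1 : dRank a < dRank w := hp.1 w (by simp [hw])
    have h2 : dRank w < dRank b := by
      have := (List.pairwise_append.mp hp.2).2.2
      exact this w hw b (by simp)
    have hra := hrank a ha
    have hrb := hrank b hb
    have : dRank w = t + 1 := by omega
    exact (dRank_eq_z this) ▸ hz


/-- For all `Q ⊆ Y` and `Q' ⊆ Y'`, the set `Q ∪ {z} ∪ Q'` is a connected
convex set of `D_t`; hence `D_t` has at least `2^(2r)` connected convex sets. -/
theorem stmt_15 (t r : ℕ) (ht : 1 ≤ t) :
    (∀ Q Q' : Set (Fin r),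
      ConnectedIn DAdj ((DV.y '' Q) ∪ {DV.z} ∪ (DV.y' '' Q') : Set (DV t r)) ∧
      ConvexIn DAdj ((DV.y '' Q) ∪ {DV.z} ∪ (DV.y' '' Q') : Set (DV t r))) ∧
    2 ^ (2 * r) ≤
      {X : Set (DV t r) | ConnectedIn DAdj X ∧ ConvexIn DAdj X}.ncard := by
  refine ⟨fun Q Q' => main_part Q Q', ?_⟩
  set F : Set (Fin r) × Set (Fin r) → Set (DV t r) :=
    fun p => (DV.y '' p.1) ∪ {DV.z} ∪ (DV.y' '' p.2) with hF
  have hFinj : Function.Injective F := by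
    rintro ⟨Q1, Q1'⟩ ⟨Q2, Q2'⟩ h
    simp only [Prod.mk.injEq]
    constructor
    · ext j
      have := Set.ext_iff.mp h (DV.y j)
      simpa [hF] using this
    · ext j
      have := Set.ext_iff.mp h (DV.y' j)
      simpa [hF] using this
  have hsub : F '' Set.univ ⊆ {X : Set (DV t r) | ConnectedIn DAdj X ∧ ConvexIn DAdj X} := by
    rintro X ⟨⟨Q, Q'⟩, -, rfl⟩
    exact main_part Q Q'
  calc 2 ^ (2 * r) = (F '' Set.univ).ncard := by
        rw [Set.ncard_image_of_injective _ hFinj, Set.ncard_univ,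
          Nat.card_eq_fintype_card, Fintype.card_prod, Fintype.card_set,
          Fintype.card_fin, two_mul, pow_add]
    _ ≤ _ := Set.ncard_le_ncard hsub (Set.toFinite _)
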